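/- Let d₁, …, d_n > 0 and g : {1,…,n} → ℝ, and let û = (û₁,…,û_n) with û₁ ≤ ⋯ ≤ û_n be the minimizer of ξ(u) = Σ_{i=1}^n (u_i − g(i))² d_i over {u₁ ≤ ⋯ ≤ u_n}. Then û is given by the left-hand slopes of the greatest convex minorant of the cumulative sum diagram: û_i equals the left derivative, evaluated at Σ_{j≤i} d_j, of the greatest convex minorant of the piecewise-linear function through the points (Σ_{j≤i} d_j, Σ_{j≤i} g(j) d_j) for i = 0,1,…,n (with the point (0,0) at i=0). -/

import Mathlib

/-- Robertson–Wright–Dykstra: the weighted isotonic regression of g with weights d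
is given by the left-hand slopes, at the abscissae Σ_{j≤i} dⱼ, of the greatest convex
minorant of the cumulative sum diagram {(Σ_{j≤i} dⱼ, Σ_{j≤i} g(j)dⱼ) : i = 0,…,n}. -/
theorem isotonic_regression_is_slogcm (n : ℕ) (d g : ℕ → ℝ)
    (hd : ∀ i ∈ Finset.Icc 1 n, 0 < d i)
    (uhat : ℕ → ℝ)
    (hmono : ∀ i j, i ∈ Finset.Icc 1 n → j ∈ Finset.Icc 1 n → i ≤ j → uhat i ≤ uhat j)
    (hmin : IsMinOn (fun u : ℕ → ℝ => ∑ i ∈ Finset.Icc 1 n, (u i - g i) ^ 2 * d i)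
        {u : ℕ → ℝ | ∀ i j, i ∈ Finset.Icc 1 n → j ∈ Finset.Icc 1 n → i ≤ j → u i ≤ u j}
        uhat)
    (X Y : ℕ → ℝ)
    (hX : ∀ i, X i = ∑ j ∈ Finset.Icc 1 i, d j)
    (hY : ∀ i, Y i = ∑ j ∈ Finset.Icc 1 i, g j * d j)
    (C : ℝ → ℝ)
    (hC : ∀ x : ℝ, C x = sSup {y : ℝ | ∃ φ : ℝ → ℝ, ConvexOn ℝ Set.univ φ ∧
        (∀ i ≤ n, φ (X i) ≤ Y i) ∧ y = φ x}) :
    ∀ i ∈ Finset.Icc 1 n, HasDerivWithinAt C (uhat i) (Set.Iio (X i)) (X i) := by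
  classical
  intro i hi
  obtain ⟨hi1, hin⟩ := Finset.mem_Icc.mp hi
  have hn1 : 1 ≤ n := hi1.trans hin
  set S : ℕ → ℝ := fun k => ∑ j ∈ Finset.Icc 1 k, uhat j * d j with hS
  have hIcc : ∀ m : ℕ, Finset.Icc 1 m = Finset.Ioc 0 m := fun m => by rw [← Finset.Icc_add_one_left_eq_Ioc]; rfl
  have hsplit : ∀ (p q : ℕ), p ≤ q → ∀ f : ℕ → ℝ,
      ∑ j ∈ Finset.Icc 1 q, f j = (∑ j ∈ Finset.Icc 1 p, f j) + ∑ j ∈ Finset.Ioc p q, f j := by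
    intro p q hpq f
    rw [hIcc, hIcc]
    exact (Finset.sum_Ioc_consecutive f (Nat.zero_le p) hpq).symm
  have hX0 : X 0 = 0 := by rw [hX]; simp
  have hY0 : Y 0 = 0 := by rw [hY]; simp
  have hS0 : S 0 = 0 := by simp [hS]
  have hXd : ∀ p q : ℕ, p ≤ q → X q - X p = ∑ j ∈ Finset.Ioc p q, d j := by
    intro p q hpq; rw [hX, hX, hsplit p q hpq]; ring
  have hdpos : ∀ j, 1 ≤ j → j ≤ n → 0 < d j := fun j h1 h2 => hd j (Finset.mem_Icc.mpr ⟨h1, h2⟩)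
  have humono : ∀ p q, 1 ≤ p → p ≤ q → q ≤ n → uhat p ≤ uhat q := fun p q h1 h2 h3 =>
    hmono p q (Finset.mem_Icc.mpr ⟨h1, h2.trans h3⟩) (Finset.mem_Icc.mpr ⟨h1.trans h2, h3⟩) h2
  have hXlt : ∀ p q : ℕ, p < q → q ≤ n → X p < X q := by
    intro p q hpq hqn
    have h : 0 < ∑ j ∈ Finset.Ioc p q, d j := by
      refine Finset.sum_pos (fun j hj => ?_) (Finset.nonempty_Ioc.mpr hpq)
      rw [Finset.mem_Ioc] at hj
      exact hdpos j (by omega) (hj.2.trans hqn)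
    have := hXd p q hpq.le; linarith
  have hXle : ∀ p q : ℕ, p ≤ q → q ≤ n → X p ≤ X q := by
    intro p q hpq hqn
    have h : 0 ≤ ∑ j ∈ Finset.Ioc p q, d j := by
      refine Finset.sum_nonneg (fun j hj => ?_)
      rw [Finset.mem_Ioc] at hj
      exact (hdpos j (by omega) (hj.2.trans hqn)).le
    have := hXd p q hpq; linarith
  have hXpos : ∀ q, 1 ≤ q → q ≤ n → 0 < X q := fun q h1 h2 => by
    have := hXlt 0 q h1 h2; rw [hX0] at this; exact this
  -- the perturbation inequality
  have key : ∀ k, k ≤ n → ∀ ε : ℝ,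
      ((fun j => uhat j + if j ≤ k then ε else 0) ∈
        {u : ℕ → ℝ | ∀ i j, i ∈ Finset.Icc 1 n → j ∈ Finset.Icc 1 n → i ≤ j → u i ≤ u j}) →
      0 ≤ 2 * ε * (S k - Y k) + ε ^ 2 * X k := by
    intro k hk ε hv
    have h1 := isMinOn_iff.mp hmin _ hv
    have e1 : ∑ j ∈ Finset.Icc 1 n, ((uhat j + if j ≤ k then ε else 0) - g j) ^ 2 * d j
        = ∑ j ∈ Finset.Icc 1 n, (uhat j - g j) ^ 2 * d j
          + (2 * ε * (S k - Y k) + ε ^ 2 * X k) := by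
      rw [hsplit k n hk (fun j => ((uhat j + if j ≤ k then ε else 0) - g j) ^ 2 * d j),
          hsplit k n hk (fun j => (uhat j - g j) ^ 2 * d j)]
      have e2 : ∑ j ∈ Finset.Icc 1 k, ((uhat j + if j ≤ k then ε else 0) - g j) ^ 2 * d j
          = ∑ j ∈ Finset.Icc 1 k,
            ((uhat j - g j) ^ 2 * d j + (2 * ε) * (uhat j * d j) - (2 * ε) * (g j * d j)
              + ε ^ 2 * d j) := by
        refine Finset.sum_congr rfl fun j hj => ?_
        rw [if_pos (Finset.mem_Icc.mp hj).2]; ring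
      have e3 : ∑ j ∈ Finset.Ioc k n, ((uhat j + if j ≤ k then ε else 0) - g j) ^ 2 * d j
          = ∑ j ∈ Finset.Ioc k n, (uhat j - g j) ^ 2 * d j := by
        refine Finset.sum_congr rfl fun j hj => ?_
        have := (Finset.mem_Ioc.mp hj).1
        rw [if_neg (by omega)]
        ring
      rw [e2, e3, Finset.sum_add_distrib, Finset.sum_sub_distrib, Finset.sum_add_distrib,
        ← Finset.mul_sum, ← Finset.mul_sum, ← Finset.mul_sum]
      rw [hY, hX]
      simp only [hS]
      ring
    rw [e1] at h1
    linarith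
  -- membership lemmas
  have memle : ∀ k, ∀ ε : ℝ, ε ≤ 0 → ((fun j => uhat j + if j ≤ k then ε else 0) ∈
      {u : ℕ → ℝ | ∀ i j, i ∈ Finset.Icc 1 n → j ∈ Finset.Icc 1 n → i ≤ j → u i ≤ u j}) := by
    intro k ε hε p q hp hq hpq
    dsimp only
    have hpq' := hmono p q hp hq hpq
    by_cases h1 : q ≤ k
    · rw [if_pos (hpq.trans h1), if_pos h1]; linarith
    · rw [if_neg h1]
      by_cases h2 : p ≤ k
      · rw [if_pos h2]; linarith
      · rw [if_neg h2]; linarith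
  have memn : ∀ ε : ℝ, ((fun j => uhat j + if j ≤ n then ε else 0) ∈
      {u : ℕ → ℝ | ∀ i j, i ∈ Finset.Icc 1 n → j ∈ Finset.Icc 1 n → i ≤ j → u i ≤ u j}) := by
    intro ε p q hp hq hpq
    dsimp only
    rw [if_pos (Finset.mem_Icc.mp hp).2, if_pos (Finset.mem_Icc.mp hq).2]
    have := hmono p q hp hq hpq; linarith
  have memk : ∀ k, 1 ≤ k → k < n → ∀ ε : ℝ, 0 ≤ ε → ε ≤ uhat (k+1) - uhat k →
      ((fun j => uhat j + if j ≤ k then ε else 0) ∈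
      {u : ℕ → ℝ | ∀ i j, i ∈ Finset.Icc 1 n → j ∈ Finset.Icc 1 n → i ≤ j → u i ≤ u j}) := by
    intro k hk1 hkn ε hε1 hε2 p q hp hq hpq
    dsimp only
    obtain ⟨hp1, hpn⟩ := Finset.mem_Icc.mp hp
    obtain ⟨hq1, hqn⟩ := Finset.mem_Icc.mp hq
    by_cases h1 : q ≤ k
    · rw [if_pos (hpq.trans h1), if_pos h1]
      have := hmono p q hp hq hpq; linarith
    · rw [if_neg h1]
      by_cases h2 : p ≤ k
      · rw [if_pos h2]
        have h3 : uhat p ≤ uhat k := humono p k hp1 h2 hkn.le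
        have h4 : uhat (k+1) ≤ uhat q := humono (k+1) q (by omega) (by omega) hqn
        linarith
      · rw [if_neg h2]
        have := hmono p q hp hq hpq; linarith
  -- first-order conditions
  have hDle : ∀ k, 1 ≤ k → k ≤ n → S k - Y k ≤ 0 := by
    intro k h1 h2
    by_contra h
    push_neg at h
    have hXk := hXpos k h1 h2
    have hεneg : -((S k - Y k) / X k) ≤ 0 := by
      have : 0 < (S k - Y k) / X k := div_pos h hXk
      linarith
    have h4 := key k h2 (-((S k - Y k) / X k)) (memle k _ hεneg)
    have h5 : 2 * (-((S k - Y k) / X k)) * (S k - Y k) + (-((S k - Y k) / X k)) ^ 2 * X k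
        = -((S k - Y k) ^ 2 / X k) := by field_simp; ring
    rw [h5] at h4
    have h6 : 0 < (S k - Y k) ^ 2 / X k := div_pos (pow_pos h 2) hXk
    linarith
  have hDn : S n - Y n = 0 := by
    have hXn := hXpos n hn1 le_rfl
    have h4 := key n le_rfl (-((S n - Y n) / X n)) (memn _)
    have h5 : 2 * (-((S n - Y n) / X n)) * (S n - Y n) + (-((S n - Y n) / X n)) ^ 2 * X n
        = -((S n - Y n) ^ 2 / X n) := by field_simp; ring
    rw [h5] at h4
    have h7 : (S n - Y n) ^ 2 / X n ≤ 0 := by linarith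
    have h8 : 0 ≤ (S n - Y n) ^ 2 / X n := div_nonneg (sq_nonneg _) hXn.le
    have h9 : (S n - Y n) ^ 2 = 0 := by
      have h10 : (S n - Y n) ^ 2 / X n = 0 := le_antisymm h7 h8
      rcases div_eq_zero_iff.mp h10 with h | h
      · exact h
      · exact absurd h (ne_of_gt hXn)
    exact pow_eq_zero_iff two_ne_zero |>.mp h9
  have hkink : ∀ k, 1 ≤ k → k < n → uhat k < uhat (k+1) → S k - Y k = 0 := by
    intro k h1 h2 h3
    have hle := hDle k h1 h2.le
    rcases eq_or_lt_of_le hle with h | h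
    · exact h
    · exfalso
      have hXk := hXpos k h1 h2.le
      set ε := min (uhat (k+1) - uhat k) (-(S k - Y k) / X k) with hε
      have hε1 : 0 < ε := lt_min (by linarith) (div_pos (by linarith) hXk)
      have h4 := key k h2.le ε (memk k h1 h2 ε hε1.le (min_le_left _ _))
      have h5 : ε * X k ≤ -(S k - Y k) := by
        have h6 : ε ≤ -(S k - Y k) / X k := min_le_right _ _
        have h7 : ε * X k ≤ (-(S k - Y k) / X k) * X k :=
          mul_le_mul_of_nonneg_right h6 hXk.le
        have h8 : (-(S k - Y k) / X k) * X k = -(S k - Y k) := by field_simp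
        linarith
      nlinarith [mul_le_mul_of_nonneg_left h5 hε1.le, mul_pos hε1 (neg_pos.mpr h)]
  -- knots
  have hP0 : S 0 - Y 0 = 0 := by rw [hS0, hY0]; ring
  set a := Nat.findGreatest (fun k => S k - Y k = 0) (i - 1) with ha
  have hbP : ∃ k, i ≤ k ∧ k ≤ n ∧ S k - Y k = 0 := ⟨n, hin, le_rfl, hDn⟩
  set b := Nat.find hbP with hb
  have hbspec := Nat.find_spec hbP
  have hbi : i ≤ b := hbspec.1
  have hb_n : b ≤ n := hbspec.2.1
  have hDb : S b - Y b = 0 := hbspec.2.2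
  have ha_le : a ≤ i - 1 := Nat.findGreatest_le _
  have hDa : S a - Y a = 0 := by
    have h := Nat.findGreatest_spec (P := fun k => S k - Y k = 0) (Nat.zero_le (i - 1)) hP0
    rw [← ha] at h
    exact h
  have hab : a < b := by omega
  have hstep : ∀ j, a + 1 ≤ j → j < b → uhat j = uhat (j + 1) := by
    intro j hj1 hj2
    have hj1' : 1 ≤ j := by omega
    have hjn : j < n := by omega
    by_contra hne
    have hlt : uhat j < uhat (j + 1) :=
      lt_of_le_of_ne (humono j (j + 1) hj1' (by omega) (by omega)) hne
    have hPj : S j - Y j = 0 := hkink j hj1' hjn hlt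
    by_cases hcase : j ≤ i - 1
    · exact Nat.findGreatest_is_greatest (show a < j by omega) hcase hPj
    · exact Nat.find_min hbP hj2 ⟨by omega, by omega, hPj⟩
  have hconst : ∀ t, ∀ m, m + t = b → a + 1 ≤ m → uhat m = uhat b := by
    intro t
    induction t with
    | zero =>
      intro m hm _
      have : m = b := by omega
      rw [this]
    | succ t ih =>
      intro m hm h1
      rw [hstep m h1 (by omega)]
      exact ih (m + 1) (by omega) (by omega)
  have huconst : ∀ m, a + 1 ≤ m → m ≤ b → uhat m = uhat b := fun m h1 h2 =>
    hconst (b - m) m (by omega) h1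
  have hui : uhat i = uhat b := huconst i (by omega) hbi
  -- affine piece
  set A : ℝ → ℝ := fun x => S b + uhat b * (x - X b) with hA
  -- general slope bound
  have hAle : ∀ m k : ℕ, 1 ≤ m → m ≤ n → k ≤ n → S m + uhat m * (X k - X m) ≤ S k := by
    intro m k hm1 hmn hkn
    rcases le_or_gt m k with h | h
    · have e1 : X k - X m = ∑ j ∈ Finset.Ioc m k, d j := hXd m k h
      have e2 : S k - S m = ∑ j ∈ Finset.Ioc m k, uhat j * d j := by
        simp only [hS]; rw [hsplit m k h]; ring
      have e3 : uhat m * ∑ j ∈ Finset.Ioc m k, d j ≤ ∑ j ∈ Finset.Ioc m k, uhat j * d j := by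
        rw [Finset.mul_sum]
        refine Finset.sum_le_sum fun j hj => ?_
        rw [Finset.mem_Ioc] at hj
        exact mul_le_mul_of_nonneg_right (humono m j hm1 hj.1.le (hj.2.trans hkn))
          (hdpos j (by omega) (hj.2.trans hkn)).le
      rw [e1]
      linarith
    · have e1 : X m - X k = ∑ j ∈ Finset.Ioc k m, d j := hXd k m h.le
      have e2 : S m - S k = ∑ j ∈ Finset.Ioc k m, uhat j * d j := by
        simp only [hS]; rw [hsplit k m h.le]; ring
      have e3 : ∑ j ∈ Finset.Ioc k m, uhat j * d j ≤ uhat m * ∑ j ∈ Finset.Ioc k m, d j := by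
        rw [Finset.mul_sum]
        refine Finset.sum_le_sum fun j hj => ?_
        rw [Finset.mem_Ioc] at hj
        exact mul_le_mul_of_nonneg_right (humono j m (by omega) hj.2 hmn)
          (hdpos j (by omega) (hj.2.trans hmn)).le
      have e4 : X k - X m = -(∑ j ∈ Finset.Ioc k m, d j) := by linarith
      rw [e4]
      linarith
  have hSY : ∀ k, k ≤ n → S k ≤ Y k := by
    intro k hk
    rcases Nat.eq_zero_or_pos k with h | h
    · subst h; rw [hS0, hY0]
    · linarith [hDle k h hk]
  -- the GCM witness
  have hne : (Finset.Icc 1 n).Nonempty := ⟨1, Finset.mem_Icc.mpr ⟨le_rfl, hn1⟩⟩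
  set Chat : ℝ → ℝ := fun x => (Finset.Icc 1 n).sup' hne (fun m => S m + uhat m * (x - X m))
    with hChat
  have hChatconv : ConvexOn ℝ Set.univ Chat := by
    refine ⟨convex_univ, fun x _ y _ p q hp hq hpq => ?_⟩
    simp only [hChat, smul_eq_mul]
    refine Finset.sup'_le _ _ fun m hm => ?_
    have h1 : S m + uhat m * ((p * x + q * y) - X m)
        = p * (S m + uhat m * (x - X m)) + q * (S m + uhat m * (y - X m)) := by
      linear_combination (uhat m * X m - S m) * hpq
    rw [h1]
    exact add_le_add
      (mul_le_mul_of_nonneg_left (Finset.le_sup' (fun m => S m + uhat m * (x - X m)) hm) hp)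
      (mul_le_mul_of_nonneg_left (Finset.le_sup' (fun m => S m + uhat m * (y - X m)) hm) hq)
  have hChatY : ∀ k, k ≤ n → Chat (X k) ≤ Y k := by
    intro k hk
    refine le_trans (Finset.sup'_le _ _ fun m hm => ?_) (hSY k hk)
    obtain ⟨hm1, hmn⟩ := Finset.mem_Icc.mp hm
    exact hAle m k hm1 hmn hk
  -- A agrees with S at the knots
  have hK1 : A (X a) = S a := by
    have e1 : X b - X a = ∑ j ∈ Finset.Ioc a b, d j := hXd a b hab.le
    have e2 : S b - S a = ∑ j ∈ Finset.Ioc a b, uhat j * d j := by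
      simp only [hS]; rw [hsplit a b hab.le]; ring
    have e3 : ∑ j ∈ Finset.Ioc a b, uhat j * d j = uhat b * ∑ j ∈ Finset.Ioc a b, d j := by
      rw [Finset.mul_sum]
      refine Finset.sum_congr rfl fun j hj => ?_
      rw [Finset.mem_Ioc] at hj
      rw [huconst j hj.1 hj.2]
    simp only [hA]
    linear_combination e2 + e3 - uhat b * e1
  have hK2 : A (X b) = S b := by simp only [hA]; ring
  -- C equals A on [X a, X b]
  have hK3 : ∀ x : ℝ, X a ≤ x → x ≤ X b → C x = A x := by
    intro x hx1 hx2
    have hXab : X a < X b := hXlt a b hab hb_n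
    set t := (X b - x) / (X b - X a) with ht
    have ht0 : 0 ≤ t := div_nonneg (by linarith) (by linarith)
    have ht1 : t ≤ 1 := by rw [div_le_one (by linarith)]; linarith
    have h0 : X b - X a ≠ 0 := ne_of_gt (by linarith : (0:ℝ) < X b - X a)
    have hxe : t * X a + (1 - t) * X b = x := by
      rw [ht]
      field_simp
      ring
    have hbound : ∀ y ∈ {y : ℝ | ∃ φ : ℝ → ℝ, ConvexOn ℝ Set.univ φ ∧
        (∀ i ≤ n, φ (X i) ≤ Y i) ∧ y = φ x}, y ≤ A x := by
      rintro y ⟨φ, hφc, hφle, rfl⟩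
      have h1 : φ x ≤ t * φ (X a) + (1 - t) * φ (X b) := by
        have h0 := hφc.2 (Set.mem_univ (X a)) (Set.mem_univ (X b)) ht0 (by linarith)
          (by ring : t + (1 - t) = 1)
        simpa [smul_eq_mul, hxe] using h0
      have h2 : φ (X a) ≤ Y a := hφle a (by omega)
      have h3 : φ (X b) ≤ Y b := hφle b hb_n
      have h4 : A x = t * A (X a) + (1 - t) * A (X b) := by
        simp only [hA]
        linear_combination (- uhat b) * hxe
      have h7 : Y a = S a := by linarith
      have h8 : Y b = S b := by linarith
      calc φ x ≤ t * φ (X a) + (1 - t) * φ (X b) := h1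
        _ ≤ t * Y a + (1 - t) * Y b :=
          add_le_add (mul_le_mul_of_nonneg_left h2 ht0)
            (mul_le_mul_of_nonneg_left h3 (by linarith))
        _ = A x := by rw [h7, h8, h4, hK1, hK2]
    have hmem : Chat x ∈ {y : ℝ | ∃ φ : ℝ → ℝ, ConvexOn ℝ Set.univ φ ∧
        (∀ i ≤ n, φ (X i) ≤ Y i) ∧ y = φ x} :=
      ⟨Chat, hChatconv, fun k hk => hChatY k hk, rfl⟩
    have hAC : A x ≤ Chat x := by
      simp only [hA, hChat]
      exact Finset.le_sup' (fun m => S m + uhat m * (x - X m))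
        (Finset.mem_Icc.mpr ⟨by omega, hb_n⟩)
    rw [hC x]
    exact le_antisymm (csSup_le ⟨Chat x, hmem⟩ hbound)
      (le_trans hAC (le_csSup ⟨A x, hbound⟩ hmem))
  -- conclude
  have hXia : X a < X i := hXlt a i (by omega) hin
  have hXib : X i ≤ X b := hXle i b hbi hb_n
  have hAder : HasDerivAt A (uhat i) (X i) := by
    have h1 : HasDerivAt (fun x : ℝ => S b + uhat b * (x - X b)) (uhat b * 1) (X i) :=
      (((hasDerivAt_id (X i)).sub_const (X b)).const_mul (uhat b)).const_add (S b)
    rw [hA, hui]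
    simpa using h1
  have hev : C =ᶠ[nhdsWithin (X i) (Set.Iio (X i))] A := by
    have h1 : ∀ᶠ x in nhdsWithin (X i) (Set.Iio (X i)), X a < x :=
      eventually_nhdsWithin_of_eventually_nhds (eventually_gt_nhds hXia)
    have h2 : ∀ᶠ x in nhdsWithin (X i) (Set.Iio (X i)), x ∈ Set.Iio (X i) :=
      eventually_mem_nhdsWithin
    filter_upwards [h1, h2] with x hx1 hx2
    exact hK3 x hx1.le (le_trans (le_of_lt hx2) hXib)
  exact (hAder.hasDerivWithinAt).congr_of_eventuallyEq hev (hK3 _ hXia.le hXib)
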